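/- Let d2, d3 be integers with 3 ≤ d2 ≤ d3 such that 3 does not divide d2 and d3 cannot be written as 3a + b·d2 with natural numbers a, b. Then there do not exist a permutation (e₁,e₂,e₃) of (3,d2,d3) and a positive integer n such that e₁ = 2n and either (e₂ = 3n and n < e₃ ≤ (3/2)·n) or ((5/2)·n < e₂ ≤ 3n and e₃ = (3/2)·n). -/
import Mathlib


/-- Suppose `3 ≤ d2 ≤ d3`, `3 ∤ d2` and `d3 ∉ 3ℕ + d2ℕ`. Then no permutation `(e₁, e₂, e₃)` of
`(3, d2, d3)` fits the degree pattern of a Shestakov–Umirbaev reduction of type III or IV: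
`e₁ = 2n` and either `e₂ = 3n` with `n < e₃ ≤ (3/2)·n`, or `(5/2)·n < e₂ ≤ 3n` with
`e₃ = (3/2)·n`. -/
theorem no_type_III_IV_pattern (d2 d3 : ℕ) (h2 : 3 ≤ d2) (h23 : d2 ≤ d3)
    (hdvd : ¬ 3 ∣ d2) (hmem : ¬ ∃ a b : ℕ, d3 = 3 * a + b * d2) :
    ¬ ∃ (e : Fin 3 → ℕ) (σ : Equiv.Perm (Fin 3)) (n : ℕ),
      e = ![3, d2, d3] ∘ σ ∧ 0 < n ∧ e 0 = 2 * n ∧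
        ((e 1 = 3 * n ∧ n < e 2 ∧ 2 * e 2 ≤ 3 * n) ∨
          (5 * n < 2 * e 1 ∧ e 1 ≤ 3 * n ∧ 2 * e 2 = 3 * n)) := by
  rintro ⟨e, σ, n, rfl, hn, h0, hcase⟩
  have h6 : d3 ≠ 6 := fun h => hmem ⟨2, 0, by omega⟩
  simp only [Function.comp_apply] at h0 hcase
  have hall : ∀ i : Fin 3, i = 0 ∨ i = 1 ∨ i = 2 := by decide
  have h01 : σ 0 ≠ σ 1 := fun h => by simpa using σ.injective h
  have h02 : σ 0 ≠ σ 2 := fun h => by simpa using σ.injective h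
  have h12 : σ 1 ≠ σ 2 := fun h => by simpa using σ.injective h
  rcases hall (σ 0) with ha | ha | ha <;> rcases hall (σ 1) with hb | hb | hb <;>
    rcases hall (σ 2) with hc | hc | hc <;>
    simp only [ha, hb, hc, ne_eq, not_true_eq_false] at h01 h02 h12 h0 hcase <;>
    simp only [Matrix.cons_val_zero, Matrix.cons_val_one, Matrix.head_cons,
      Matrix.cons_val_two, Matrix.tail_cons] at h0 hcase <;>
    omega
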